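/- The total number of ordered prefix tables on [n] equals Σ_{k=1}^{n} (k−1)! · k! · S(n,k) · S(n+1,k), where S denotes Stirling numbers of the second kind. -/

import Mathlib

/-- Stirling numbers of the second kind. -/
def stirling2 : ℕ → ℕ → ℕ
  | 0, 0 => 1
  | 0, _ + 1 => 0
  | _ + 1, 0 => 0
  | n + 1, k + 1 => (k + 1) * stirling2 n (k + 1) + stirling2 n k

/-- An ordered prefix table on `[n]`. -/
def IsOPT {n : ℕ} (f : Fin n → Finset (Fin n)) : Prop :=
  (∀ u, (f u).Nonempty) ∧ (∀ i j, f i ⊆ f j ∨ f j ⊆ f i) ∧ ∃ i, ∀ j, f i ⊆ f j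

namespace OPTAux

open Finset Function

lemma stirling2_eq_zero : ∀ {n k : ℕ}, n < k → stirling2 n k = 0
  | 0, 0, h => by omega
  | 0, k+1, _ => rfl
  | n+1, 0, h => by omega
  | n+1, k+1, h => by
    have h1 : stirling2 n (k+1) = 0 := stirling2_eq_zero (by omega)
    have h2 : stirling2 n k = 0 := stirling2_eq_zero (by omega)
    show (k+1) * stirling2 n (k+1) + stirling2 n k = 0
    simp [h1, h2]

/-- number of functions `Fin k → Prop`-style: card of `{t : Fin k | t < m}` for `m ≤ k`. -/
lemma card_filter_val_lt (k m : ℕ) (hm : m ≤ k) :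
    ((Finset.univ : Finset (Fin k)).filter (fun t : Fin k => (t : ℕ) < m)).card = m := by
  have key : ((Finset.univ : Finset (Fin k)).filter (fun t : Fin k => (t : ℕ) < m)).card
      = ((Finset.univ : Finset (Fin m))).card := by
    refine Finset.card_bij'
      (fun (t : Fin k) ht => (⟨(t : ℕ), by simpa using (Finset.mem_filter.mp ht).2⟩ : Fin m))
      (fun (j : Fin m) _ => (⟨(j : ℕ), lt_of_lt_of_le j.isLt hm⟩ : Fin k)) ?_ ?_ ?_ ?_
    · intro a ha; exact Finset.mem_univ _
    · intro a _; simp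
    · intro a ha; rfl
    · intro a ha; rfl
  rw [key, Finset.card_fin]

/-- The number of surjections `Fin n → Fin k`. -/
def sCount (n k : ℕ) : ℕ :=
  ((Finset.univ : Finset (Fin n → Fin k)).filter (fun f => Surjective f)).card

/-- The number of functions `Fin n → Fin (k+1)` hitting all of the first `k` values. -/
def qCount (n k : ℕ) : ℕ :=
  ((Finset.univ : Finset (Fin n → Fin (k+1))).filter
    (fun q => ∀ j : Fin k, ∃ x, q x = j.castSucc)).card

lemma sCount_zero_zero : sCount 0 0 = 1 := by
  rw [sCount]
  have h : ∀ f ∈ (Finset.univ : Finset (Fin 0 → Fin 0)), Surjective f := fun f _ y => y.elim0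
  rw [Finset.filter_true_of_mem h]
  simp

lemma sCount_zero_succ (k : ℕ) : sCount 0 (k+1) = 0 := by
  rw [sCount, Finset.card_eq_zero, Finset.filter_eq_empty_iff]
  intro f _ hs
  obtain ⟨x, -⟩ := hs 0
  exact x.elim0

lemma sCount_succ_zero (n : ℕ) : sCount (n+1) 0 = 0 := by
  rw [sCount, Finset.card_eq_zero, Finset.filter_eq_empty_iff]
  intro f _
  exact (f 0).elim0

lemma not_surj_ne_last {n k : ℕ} (q : Fin n → Fin (k+1))
    (hP : ∀ j : Fin k, ∃ x, q x = j.castSucc) (hS : ¬ Surjective q) :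
    ∀ x, q x ≠ Fin.last k := by
  intro x hx
  apply hS
  intro w
  rcases Fin.eq_castSucc_or_eq_last w with ⟨j, rfl⟩ | rfl
  · exact hP j
  · exact ⟨x, hx⟩

lemma qCount_eq_add (n k : ℕ) : qCount n k = sCount n (k+1) + sCount n k := by
  classical
  rw [qCount, ← Finset.card_filter_add_card_filter_not
    (p := fun q : Fin n → Fin (k+1) => Surjective q)]
  congr 1
  · -- surjective part equals sCount n (k+1)
    rw [sCount]
    congr 1
    rw [Finset.filter_filter]
    apply Finset.filter_congr
    intro q _
    constructor
    · exact fun h => h.2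
    · exact fun h => ⟨fun j => h j.castSucc, h⟩
  · -- non-surjective part equals sCount n k
    rw [sCount]
    refine Finset.card_bij'
      (fun (q : Fin n → Fin (k+1)) hq => fun x => (q x).castPred
        (not_surj_ne_last q (Finset.mem_filter.mp (Finset.mem_filter.mp hq).1).2
          (Finset.mem_filter.mp hq).2 x))
      (fun (g : Fin n → Fin k) _ => fun x => (g x).castSucc) ?_ ?_ ?_ ?_
    · intro q hq
      simp only [Finset.mem_filter, Finset.mem_univ, true_and]
      intro t
      obtain ⟨x, hx⟩ := (Finset.mem_filter.mp (Finset.mem_filter.mp hq).1).2 t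
      exact ⟨x, by simp [hx]⟩
    · intro g hg
      simp only [Finset.mem_filter, Finset.mem_univ, true_and] at hg ⊢
      refine ⟨fun j => ?_, ?_⟩
      · obtain ⟨x, hx⟩ := hg j
        exact ⟨x, by rw [hx]⟩
      · intro hs
        obtain ⟨x, hx⟩ := hs (Fin.last k)
        exact (Fin.castSucc_lt_last (g x)).ne hx
    · intro q hq; funext x; simp
    · intro g hg; funext x; simp

lemma sCount_succ_succ (n k : ℕ) : sCount (n+1) (k+1) = (k+1) * qCount n k := by
  classical
  have hcard : (k+1) * qCount n k =
      ((Finset.univ : Finset (Fin (k+1))) ×ˢ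
        ((Finset.univ : Finset (Fin n → Fin (k+1))).filter
          (fun q => ∀ j : Fin k, ∃ x, q x = j.castSucc))).card := by
    rw [Finset.card_product, Finset.card_univ, Fintype.card_fin, qCount]
  rw [hcard, sCount]
  refine Finset.card_bij'
    (fun (g : Fin (n+1) → Fin (k+1)) _ =>
      (g 0, fun x => Equiv.swap (g 0) (Fin.last k) (g x.succ)))
    (fun (p : Fin (k+1) × (Fin n → Fin (k+1))) _ =>
      Fin.cons p.1 (fun x => Equiv.swap p.1 (Fin.last k) (p.2 x))) ?_ ?_ ?_ ?_
  · intro g hg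
    simp only [Finset.mem_filter, Finset.mem_univ, true_and] at hg
    rw [Finset.mem_product]
    refine ⟨Finset.mem_univ _, ?_⟩
    simp only [Finset.mem_filter, Finset.mem_univ, true_and]
    intro j
    obtain ⟨y, hy⟩ := hg (Equiv.swap (g 0) (Fin.last k) j.castSucc)
    rcases Fin.eq_zero_or_eq_succ y with rfl | ⟨x, rfl⟩
    · exfalso
      have h2 := congrArg (Equiv.swap (g 0) (Fin.last k)) hy
      rw [Equiv.swap_apply_left, Equiv.swap_apply_self] at h2
      exact (Fin.castSucc_lt_last j).ne h2.symm
    · exact ⟨x, by rw [hy, Equiv.swap_apply_self]⟩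
  · intro p hp
    rw [Finset.mem_product] at hp
    simp only [Finset.mem_filter, Finset.mem_univ, true_and] at hp ⊢
    intro w
    by_cases hw : w = p.1
    · exact ⟨0, by simp [hw]⟩
    · have hne : Equiv.swap p.1 (Fin.last k) w ≠ Fin.last k := by
        intro hcontra
        apply hw
        have h2 := congrArg (Equiv.swap p.1 (Fin.last k)) hcontra
        rw [Equiv.swap_apply_self, Equiv.swap_apply_right] at h2
        exact h2
      rcases Fin.eq_castSucc_or_eq_last (Equiv.swap p.1 (Fin.last k) w) with ⟨j, hj⟩ | hl
      · obtain ⟨x, hx⟩ := hp j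
        refine ⟨x.succ, ?_⟩
        rw [Fin.cons_succ, hx, ← hj, Equiv.swap_apply_self]
      · exact absurd hl hne
  · intro g hg
    funext y
    rcases Fin.eq_zero_or_eq_succ y with rfl | ⟨x, rfl⟩
    · simp
    · simp [Equiv.swap_apply_self]
  · intro p hp
    refine Prod.ext ?_ ?_
    · simp
    · funext x
      simp [Equiv.swap_apply_self]

lemma sCount_eq (n k : ℕ) : sCount n k = k.factorial * stirling2 n k := by
  induction n generalizing k with
  | zero =>
    match k with
    | 0 => simpa [stirling2] using sCount_zero_zero
    | k+1 => simp [sCount_zero_succ, stirling2]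
  | succ n ih =>
    match k with
    | 0 => simp [sCount_succ_zero, stirling2]
    | k+1 =>
      rw [sCount_succ_succ, qCount_eq_add, ih, ih]
      show _ = (k+1).factorial * ((k + 1) * stirling2 n (k + 1) + stirling2 n k)
      rw [Nat.factorial_succ]
      ring

lemma qCount_eq (n k : ℕ) : qCount n k = k.factorial * stirling2 (n+1) (k+1) := by
  have h := sCount_succ_succ n k
  rw [sCount_eq] at h
  apply Nat.eq_of_mul_eq_mul_left (show 0 < k+1 by omega)
  rw [← h]
  show (k+1).factorial * _ = _
  rw [Nat.factorial_succ]; ring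


section Main

variable {n k : ℕ}

/-- rank index of a value `A` in the chain of values of `f`. -/
def rIdx (f : Fin n → Finset (Fin n)) (A : Finset (Fin n)) : ℕ :=
  ((Finset.univ.image f).filter (fun B => B ⊂ A)).card

/-- level of an element: number of values not containing it. -/
def qIdx (f : Fin n → Finset (Fin n)) (x : Fin n) : ℕ :=
  ((Finset.univ.image f).filter (fun B => x ∉ B)).card

variable {f : Fin n → Finset (Fin n)}

lemma chain_compare (hf : IsOPT f) {A B : Finset (Fin n)}
    (hA : A ∈ Finset.univ.image f) (hB : B ∈ Finset.univ.image f) : A ⊆ B ∨ B ⊆ A := by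
  obtain ⟨i, -, rfl⟩ := Finset.mem_image.mp hA
  obtain ⟨j, -, rfl⟩ := Finset.mem_image.mp hB
  exact hf.2.1 i j

lemma rIdx_strictMono (hf : IsOPT f) {A B : Finset (Fin n)}
    (hA : A ∈ Finset.univ.image f) (hB : B ∈ Finset.univ.image f) (hAB : A ⊂ B) :
    rIdx f A < rIdx f B := by
  apply Finset.card_lt_card
  rw [Finset.ssubset_iff_of_subset]
  · exact ⟨A, Finset.mem_filter.mpr ⟨hA, hAB⟩, fun hcon =>
      (Finset.mem_filter.mp hcon).2.2 (Finset.Subset.refl A)⟩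
  · intro C hC
    rw [Finset.mem_filter] at hC ⊢
    exact ⟨hC.1, hC.2.trans hAB⟩

lemma rIdx_lt (hf : IsOPT f) (hcard : (Finset.univ.image f).card = k) (i : Fin n) :
    rIdx f (f i) < k := by
  have hmem : f i ∈ Finset.univ.image f := Finset.mem_image_of_mem f (Finset.mem_univ i)
  have hsub : (Finset.univ.image f).filter (fun B => B ⊂ f i) ⊆
      (Finset.univ.image f).erase (f i) := by
    intro C hC
    rw [Finset.mem_filter] at hC
    exact Finset.mem_erase.mpr ⟨Finset.ssubset_iff_subset_ne.mp hC.2 |>.2, hC.1⟩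
  calc rIdx f (f i) ≤ ((Finset.univ.image f).erase (f i)).card := Finset.card_le_card hsub
    _ = k - 1 := by rw [Finset.card_erase_of_mem hmem, hcard]
    _ < k := by
        have : 0 < k := hcard ▸ Finset.card_pos.mpr ⟨f i, hmem⟩
        omega

lemma qIdx_le (hcard : (Finset.univ.image f).card = k) (x : Fin n) : qIdx f x ≤ k :=
  hcard ▸ Finset.card_le_card (Finset.filter_subset _ _)

lemma rIdx_image (hf : IsOPT f) (hcard : (Finset.univ.image f).card = k) :
    (Finset.univ.image f).image (rIdx f) = Finset.range k := by
  have hinj : Set.InjOn (rIdx f) (Finset.univ.image f) := by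
    intro A hA B hB hr
    by_contra hne
    rcases chain_compare hf hA hB with h | h
    · exact absurd hr (Nat.ne_of_lt (rIdx_strictMono hf hA hB (h.ssubset_of_ne hne)))
    · exact absurd hr.symm
        (Nat.ne_of_lt (rIdx_strictMono hf hB hA (h.ssubset_of_ne (Ne.symm hne))))
  apply Finset.eq_of_subset_of_card_le
  · intro t ht
    obtain ⟨A, hA, rfl⟩ := Finset.mem_image.mp ht
    obtain ⟨i, -, rfl⟩ := Finset.mem_image.mp hA
    exact Finset.mem_range.mpr (rIdx_lt hf hcard i)
  · rw [Finset.card_range, Finset.card_image_of_injOn hinj, hcard]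

lemma exists_rIdx_eq (hf : IsOPT f) (hcard : (Finset.univ.image f).card = k)
    {t : ℕ} (ht : t < k) : ∃ i : Fin n, rIdx f (f i) = t := by
  have : t ∈ (Finset.univ.image f).image (rIdx f) := by
    rw [rIdx_image hf hcard]; exact Finset.mem_range.mpr ht
  obtain ⟨A, hA, hr⟩ := Finset.mem_image.mp this
  obtain ⟨i, -, rfl⟩ := Finset.mem_image.mp hA
  exact ⟨i, hr⟩

lemma exists_qIdx_eq (hf : IsOPT f) (hcard : (Finset.univ.image f).card = k)
    {t : ℕ} (ht : t < k) : ∃ x : Fin n, qIdx f x = t := by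
  obtain ⟨i, hri⟩ := exists_rIdx_eq hf hcard ht
  set A := f i with hAdef
  have hA : A ∈ Finset.univ.image f := Finset.mem_image_of_mem f (Finset.mem_univ i)
  -- find x ∈ A not in any value strictly below A
  have hx : ∃ x ∈ A, ∀ B ∈ Finset.univ.image f, B ⊂ A → x ∉ B := by
    by_cases hne : ((Finset.univ.image f).filter (fun B => B ⊂ A)).Nonempty
    · obtain ⟨A', hA'mem, hA'max⟩ := Finset.exists_maximal hne
      rw [Finset.mem_filter] at hA'mem
      obtain ⟨x, hxA, hxA'⟩ := Finset.exists_of_ssubset hA'mem.2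
      refine ⟨x, hxA, fun B hB hBA hxB => ?_⟩
      have hBle : B ⊆ A' := by
        rcases chain_compare hf hB hA'mem.1 with h | h
        · exact h
        · rcases (Finset.le_iff_subset.mpr h).lt_or_eq with h' | h'
          · exact absurd h' (not_lt_of_ge (hA'max (Finset.mem_filter.mpr ⟨hB, hBA⟩) h'.le))
          · exact le_of_eq h'.symm
      exact hxA' (hBle hxB)
    · obtain ⟨x, hxA⟩ := hf.1 i
      refine ⟨x, hxA, fun B hB hBA _ => ?_⟩
      exact hne ⟨B, Finset.mem_filter.mpr ⟨hB, hBA⟩⟩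
  obtain ⟨x, hxA, hxmin⟩ := hx
  refine ⟨x, ?_⟩
  have hset : (Finset.univ.image f).filter (fun B => x ∉ B) =
      (Finset.univ.image f).filter (fun B => B ⊂ A) := by
    apply Finset.filter_congr
    intro B hB
    constructor
    · intro hxB
      rcases chain_compare hf hA hB with h | h
      · exact absurd (h hxA) hxB
      · exact h.ssubset_of_ne (fun hEq => hxB (hEq ▸ hxA))
    · exact fun h => hxmin B hB h
  rw [qIdx, hset, ← rIdx, hri]

lemma mem_value_iff (hf : IsOPT f) (i : Fin n) (x : Fin n) :
    x ∈ f i ↔ qIdx f x ≤ rIdx f (f i) := by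
  have hA : f i ∈ Finset.univ.image f := Finset.mem_image_of_mem f (Finset.mem_univ i)
  constructor
  · intro hx
    apply Finset.card_le_card
    intro B hB
    rw [Finset.mem_filter] at hB ⊢
    refine ⟨hB.1, ?_⟩
    rcases chain_compare hf hA hB.1 with h | h
    · exact absurd (h hx) hB.2
    · exact h.ssubset_of_ne (fun hEq => hB.2 (hEq ▸ hx))
  · intro hle
    by_contra hx
    have hlt : rIdx f (f i) < qIdx f x := by
      apply Finset.card_lt_card
      rw [Finset.ssubset_iff_of_subset]
      · refine ⟨f i, Finset.mem_filter.mpr ⟨hA, hx⟩, fun hcon => ?_⟩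
        exact (Finset.mem_filter.mp hcon).2.2 (Finset.Subset.refl _)
      · intro B hB
        rw [Finset.mem_filter] at hB ⊢
        exact ⟨hB.1, fun hxB => hx (hB.2.1 hxB)⟩
    omega

/-! ### reconstruction from a pair -/

/-- the `t`-th value built from a level function `q`. -/
def levelSet (q : Fin n → Fin (k+1)) (t : ℕ) : Finset (Fin n) :=
  Finset.univ.filter (fun x => (q x : ℕ) ≤ t)

variable {p : Fin n → Fin k} {q : Fin n → Fin (k+1)}

lemma levelSet_mono {s t : ℕ} (hst : s ≤ t) : levelSet q s ⊆ levelSet q t := by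
  intro x hx
  rw [levelSet, Finset.mem_filter] at hx ⊢
  exact ⟨hx.1, hx.2.trans hst⟩

lemma levelSet_ssubset (hq : ∀ j : Fin k, ∃ x, q x = j.castSucc)
    {s t : ℕ} (hst : s < t) (htk : t < k) : levelSet q s ⊂ levelSet q t := by
  rw [Finset.ssubset_iff_of_subset (levelSet_mono (le_of_lt hst))]
  obtain ⟨x, hx⟩ := hq ⟨t, htk⟩
  have hval : (q x : ℕ) = t := by rw [hx]; rfl
  exact ⟨x, Finset.mem_filter.mpr ⟨Finset.mem_univ _, le_of_eq hval⟩,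
    fun hcon => by
      rw [levelSet, Finset.mem_filter] at hcon
      omega⟩

lemma levelSet_ssubset_iff (hq : ∀ j : Fin k, ∃ x, q x = j.castSucc)
    {s t : Fin k} : levelSet q (s : ℕ) ⊂ levelSet q (t : ℕ) ↔ (s : ℕ) < (t : ℕ) := by
  constructor
  · intro h
    by_contra hle
    exact (h.2 (levelSet_mono (by omega))).elim
  · exact fun h => levelSet_ssubset hq h t.isLt

lemma levelSet_injOn (hq : ∀ j : Fin k, ∃ x, q x = j.castSucc) :
    Function.Injective (fun t : Fin k => levelSet q (t : ℕ)) := by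
  intro s t hst
  rcases lt_trichotomy (s : ℕ) (t : ℕ) with h | h | h
  · exact absurd hst (levelSet_ssubset hq h t.isLt).ne
  · exact Fin.ext h
  · exact absurd hst.symm (levelSet_ssubset hq h s.isLt).ne

/-- the reconstructed table. -/
def recon (p : Fin n → Fin k) (q : Fin n → Fin (k+1)) : Fin n → Finset (Fin n) :=
  fun i => levelSet q ((p i : ℕ))

lemma recon_isOPT (hk : 1 ≤ k) (hp : Function.Surjective p)
    (hq : ∀ j : Fin k, ∃ x, q x = j.castSucc) : IsOPT (recon p q) := by
  refine ⟨?_, ?_, ?_⟩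
  · intro u
    obtain ⟨x, hx⟩ := hq ⟨0, hk⟩
    refine ⟨x, Finset.mem_filter.mpr ⟨Finset.mem_univ _, ?_⟩⟩
    rw [hx]
    exact Nat.zero_le _
  · intro i j
    rcases Nat.le_total ((p i : ℕ)) ((p j : ℕ)) with h | h
    · exact Or.inl (levelSet_mono h)
    · exact Or.inr (levelSet_mono h)
  · obtain ⟨i, hi⟩ := hp ⟨0, hk⟩
    refine ⟨i, fun j => levelSet_mono ?_⟩
    rw [hi]
    exact Nat.zero_le _

lemma recon_image (hp : Function.Surjective p) :
    Finset.univ.image (recon p q) =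
      Finset.univ.image (fun t : Fin k => levelSet q (t : ℕ)) := by
  rw [show recon p q = (fun t : Fin k => levelSet q (t : ℕ)) ∘ p from rfl,
    ← Finset.image_image, Finset.image_univ_of_surjective hp]

lemma recon_card (hp : Function.Surjective p)
    (hq : ∀ j : Fin k, ∃ x, q x = j.castSucc) :
    (Finset.univ.image (recon p q)).card = k := by
  rw [recon_image hp, Finset.card_image_of_injective _ (levelSet_injOn hq),
    Finset.card_univ, Fintype.card_fin]

lemma recon_rIdx (hp : Function.Surjective p)
    (hq : ∀ j : Fin k, ∃ x, q x = j.castSucc) (i : Fin n) :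
    rIdx (recon p q) (recon p q i) = (p i : ℕ) := by
  have hset : (Finset.univ.image (recon p q)).filter (fun B => B ⊂ recon p q i) =
      (Finset.univ.filter (fun t : Fin k => (t : ℕ) < (p i : ℕ))).image
        (fun t : Fin k => levelSet q (t : ℕ)) := by
    rw [recon_image hp]
    ext B
    simp only [Finset.mem_filter, Finset.mem_image, Finset.mem_univ, true_and]
    constructor
    · rintro ⟨⟨t, rfl⟩, hB⟩
      exact ⟨t, (levelSet_ssubset_iff hq).mp hB, rfl⟩
    · rintro ⟨t, ht, rfl⟩
      exact ⟨⟨t, rfl⟩, (levelSet_ssubset_iff hq).mpr ht⟩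
  rw [rIdx, hset, Finset.card_image_of_injective _ (levelSet_injOn hq),
    card_filter_val_lt k _ (le_of_lt (p i).isLt)]

lemma recon_qIdx (hp : Function.Surjective p)
    (hq : ∀ j : Fin k, ∃ x, q x = j.castSucc) (x : Fin n) :
    qIdx (recon p q) x = (q x : ℕ) := by
  have hset : (Finset.univ.image (recon p q)).filter (fun B => x ∉ B) =
      (Finset.univ.filter (fun t : Fin k => (t : ℕ) < (q x : ℕ))).image
        (fun t : Fin k => levelSet q (t : ℕ)) := by
    rw [recon_image hp]
    ext B
    simp only [Finset.mem_filter, Finset.mem_image, Finset.mem_univ, true_and]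
    constructor
    · rintro ⟨⟨t, rfl⟩, hB⟩
      refine ⟨t, ?_, rfl⟩
      rw [levelSet, Finset.mem_filter] at hB
      push_neg at hB
      exact hB (Finset.mem_univ _)
    · rintro ⟨t, ht, rfl⟩
      refine ⟨⟨t, rfl⟩, ?_⟩
      rw [levelSet, Finset.mem_filter]
      push_neg
      intro _
      exact ht
  rw [qIdx, hset, Finset.card_image_of_injective _ (levelSet_injOn hq),
    card_filter_val_lt k _ (Nat.lt_succ_iff.mp (q x).isLt)]

end Main

lemma card_optFiber {n k : ℕ} (hk1 : 1 ≤ k)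
    [DecidablePred (fun f : Fin n → Finset (Fin n) =>
      IsOPT f ∧ (Finset.univ.image f).card = k)] :
    (Finset.univ.filter (fun f : Fin n → Finset (Fin n) =>
        IsOPT f ∧ (Finset.univ.image f).card = k)).card = sCount n k * qCount n k := by
  classical
  rw [sCount, qCount, ← Finset.card_product]
  refine Finset.card_bij'
    (fun f hf =>
      ((fun i => (⟨rIdx f (f i),
          rIdx_lt (Finset.mem_filter.mp hf).2.1 (Finset.mem_filter.mp hf).2.2 i⟩ : Fin k)),
       (fun x => (⟨qIdx f x,
          Nat.lt_succ_of_le (qIdx_le (Finset.mem_filter.mp hf).2.2 x)⟩ : Fin (k+1)))))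
    (fun pq _ => recon pq.1 pq.2) ?_ ?_ ?_ ?_
  · -- forward lands in product
    intro f hf
    have hof := (Finset.mem_filter.mp hf).2.1
    have hcard := (Finset.mem_filter.mp hf).2.2
    rw [Finset.mem_product]
    constructor
    · simp only [Finset.mem_filter, Finset.mem_univ, true_and]
      intro t
      obtain ⟨i, hi⟩ := exists_rIdx_eq hof hcard t.isLt
      exact ⟨i, Fin.ext hi⟩
    · simp only [Finset.mem_filter, Finset.mem_univ, true_and]
      intro j
      obtain ⟨x, hx⟩ := exists_qIdx_eq hof hcard j.isLt
      exact ⟨x, Fin.ext (by simpa using hx)⟩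
  · -- backward lands in the fiber
    intro pq hpq
    rw [Finset.mem_product] at hpq
    simp only [Finset.mem_filter, Finset.mem_univ, true_and] at hpq
    rw [Finset.mem_filter]
    exact ⟨Finset.mem_univ _,
      recon_isOPT hk1 hpq.1 hpq.2, recon_card hpq.1 hpq.2⟩
  · -- left inverse
    intro f hf
    have hof := (Finset.mem_filter.mp hf).2.1
    funext i
    ext x
    simp only [recon, levelSet, Finset.mem_filter, Finset.mem_univ, true_and]
    exact (mem_value_iff hof i x).symm
  · -- right inverse
    intro pq hpq
    rw [Finset.mem_product] at hpq
    simp only [Finset.mem_filter, Finset.mem_univ, true_and] at hpq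
    obtain ⟨hp, hq⟩ := hpq
    refine Prod.ext ?_ ?_
    · funext i
      exact Fin.ext (recon_rIdx hp hq i)
    · funext x
      exact Fin.ext (recon_qIdx hp hq x)

lemma sum_identity {n : ℕ} (hn : 1 ≤ n) :
    ∑ k ∈ Finset.Icc 1 n,
        k.factorial * stirling2 n k * (k.factorial * stirling2 (n+1) (k+1))
      = ∑ k ∈ Finset.Icc 1 n,
        (k-1).factorial * k.factorial * stirling2 n k * stirling2 (n + 1) k := by
  have hIcc : Finset.Icc 1 n = Finset.Ico 1 (n+1) := by rw [Finset.Ico_add_one_right_eq_Icc]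
  rw [hIcc, Finset.sum_Ico_eq_sum_range, Finset.sum_Ico_eq_sum_range]
  simp only [Nat.add_sub_cancel]
  have hs : ∀ m, stirling2 (n+1) (m+1) = (m+1) * stirling2 n (m+1) + stirling2 n m :=
    fun m => rfl
  set a : ℕ → ℕ := stirling2 n with ha
  set c : ℕ → ℕ := fun j => j.factorial * (j+1).factorial * a j * a (j+1) with hc
  set d : ℕ → ℕ := fun j => j.factorial * j.factorial * a j * a j with hd
  have hL : ∀ j, (1+j).factorial * a (1+j) * ((1+j).factorial * stirling2 (n+1) (1+j+1))
      = c (j+1) + d (j+1) := by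
    intro j
    have h1 : 1 + j = j + 1 := by omega
    rw [h1, hs (j+1), hc, hd]
    simp only [Nat.factorial_succ (j+1)]
    ring
  have hR : ∀ j, (1+j-1).factorial * (1+j).factorial * a (1+j) * stirling2 (n+1) (1+j)
      = d (j+1) + c j := by
    intro j
    have h1 : 1 + j = j + 1 := by omega
    rw [h1, Nat.add_sub_cancel, hs j, hc, hd]
    simp only [Nat.factorial_succ j]
    ring
  calc ∑ j ∈ Finset.range n,
        (1+j).factorial * a (1+j) * ((1+j).factorial * stirling2 (n+1) (1+j+1))
      = ∑ j ∈ Finset.range n, (c (j+1) + d (j+1)) :=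
        Finset.sum_congr rfl (fun j _ => hL j)
    _ = ∑ j ∈ Finset.range n, (d (j+1) + c j) := by
        rw [Finset.sum_add_distrib, Finset.sum_add_distrib]
        have h0 : c 0 = 0 := by
          obtain ⟨m, rfl⟩ : ∃ m, n = m + 1 := ⟨n - 1, by omega⟩
          have : a 0 = 0 := rfl
          simp [hc, this]
        have hnn : c n = 0 := by
          have : a (n+1) = 0 := stirling2_eq_zero (by omega)
          simp [hc, this]
        have e1 := Finset.sum_range_succ c n
        have e2 := Finset.sum_range_succ' c n
        omega
    _ = ∑ j ∈ Finset.range n,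
        (1+j-1).factorial * (1+j).factorial * a (1+j) * stirling2 (n+1) (1+j) :=
        Finset.sum_congr rfl (fun j _ => (hR j).symm)

end OPTAux

theorem count_ordered_prefix_tables {n : ℕ} (hn : 1 ≤ n) :
    Nat.card {f : Fin n → Finset (Fin n) // IsOPT f} =
      ∑ k ∈ Finset.Icc 1 n,
        Nat.factorial (k - 1) * Nat.factorial k * stirling2 n k * stirling2 (n + 1) k := by
  classical
  have hne : Nonempty (Fin n) := ⟨⟨0, hn⟩⟩
  have h1 : Nat.card {f : Fin n → Finset (Fin n) // IsOPT f}
      = (Finset.univ.filter (fun f : Fin n → Finset (Fin n) => IsOPT f)).card := by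
    rw [Nat.card_eq_fintype_card, Fintype.card_subtype]
  rw [h1]
  rw [Finset.card_eq_sum_card_fiberwise
    (f := fun f : Fin n → Finset (Fin n) => (Finset.univ.image f).card)
    (t := Finset.Icc 1 n) ?_]
  · have hterm : ∀ k ∈ Finset.Icc 1 n,
        ((Finset.univ.filter (fun f : Fin n → Finset (Fin n) => IsOPT f)).filter
          (fun f => (Finset.univ.image f).card = k)).card
        = k.factorial * stirling2 n k * (k.factorial * stirling2 (n+1) (k+1)) := by
      intro k hk
      rw [Finset.filter_filter]
      rw [OPTAux.card_optFiber (Finset.mem_Icc.mp hk).1, OPTAux.sCount_eq, OPTAux.qCount_eq]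
    rw [Finset.sum_congr rfl hterm]
    exact OPTAux.sum_identity hn
  · intro f hf
    rw [Finset.mem_coe] at hf
    rw [Finset.mem_coe, Finset.mem_Icc]
    constructor
    · exact Finset.card_pos.mpr (Finset.univ_nonempty.image f)
    · exact Finset.card_image_le.trans (by simp)
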